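/- Let X be a nontrivial finite group with k := k(X) conjugacy classes, let H ≤ Sym({1,…,n}) be a nontrivial permutation group, and let G = X ≀ H. If α(H)·n ≤ n − log_k(2kn|H|²), where α(H) := max_{1≠h∈H} σ(h)/n, then k(G) < (1 + 1/(kn)) · k^n/|H|. -/

import Mathlib

open Equiv MulAction

/-- The number of conjugacy classes of a group. -/
noncomputable def kclass (G : Type*) [Group G] : ℕ := Nat.card (ConjClasses G)

/-- The coordinate-permuting action of `Perm ι` on `ι → X`, as automorphisms. -/
def permAut (ι X : Type*) [Group X] : Perm ι →* MulAut (ι → X) where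
  toFun e :=
    { toFun := fun f => f ∘ e.symm
      invFun := fun f => f ∘ e
      left_inv := fun f => by funext i; simp
      right_inv := fun f => by funext i; simp
      map_mul' := fun f g => rfl }
  map_one' := by ext f; rfl
  map_mul' := fun e₁ e₂ => by ext f; rfl

/-- The wreath product `X ≀ H` of a group `X` with a permutation group `H ≤ Perm ι`,
i.e. the semidirect product `X^ι ⋊ H` where `H` permutes the direct factors of `X^ι`. -/
abbrev Wreath (X : Type*) [Group X] {ι : Type*} (H : Subgroup (Perm ι)) :=
  SemidirectProduct (ι → X) H ((permAut ι X).comp H.subtype)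

/-- A group acting on `Ω` acts on the functions `Ω → S` by permuting coordinates. -/
instance funMulAction (G Ω S : Type*) [Group G] [MulAction G Ω] : MulAction G (Ω → S) where
  smul g f := fun ω => f (g⁻¹ • ω)
  one_smul f := funext fun ω => by
    show f ((1 : G)⁻¹ • ω) = f ω
    rw [inv_one, one_smul]
  mul_smul g h f := funext fun ω => by
    show f ((g * h)⁻¹ • ω) = f (h⁻¹ • g⁻¹ • ω)
    rw [mul_inv_rev, mul_smul]

/-- `σ(h)`: the number of cycles of a permutation `h` in its disjoint cycle decomposition,
with fixed points counted as cycles of length 1; equivalently, the number of orbits of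
the cyclic group generated by `h`. -/
noncomputable def cycleCount {ι : Type*} (h : Perm ι) : ℕ :=
  Nat.card (orbitRel.Quotient (Subgroup.zpowers h) ι)

/-- `n(G, α)`: the number of orbits of a group action. -/
noncomputable def orbitCount (G : Type*) [Group G] (α : Type*) [MulAction G α] : ℕ :=
  Nat.card (orbitRel.Quotient G α)

variable {n : ℕ} {X : Type} [Group X]

noncomputable def pbase (h : Perm (Fin n)) (i : Fin n) : Fin n :=
  (Finset.univ.filter (fun j => h.SameCycle i j)).min'
    ⟨i, by simp [Perm.SameCycle.refl]⟩

lemma pbase_sameCycle (h : Perm (Fin n)) (i : Fin n) : h.SameCycle i (pbase h i) := by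
  have := Finset.min'_mem (Finset.univ.filter (fun j => h.SameCycle i j))
    ⟨i, by simp [Perm.SameCycle.refl]⟩
  exact (Finset.mem_filter.mp this).2

lemma pbase_congr {h : Perm (Fin n)} {i j : Fin n} (hij : h.SameCycle i j) :
    pbase h i = pbase h j := by
  unfold pbase
  congr 1
  ext x
  simp only [Finset.mem_filter, Finset.mem_univ, true_and]
  exact ⟨fun hx => hij.symm.trans hx, fun hx => hij.trans hx⟩

lemma pbase_pbase (h : Perm (Fin n)) (i : Fin n) : pbase h (pbase h i) = pbase h i :=
  (pbase_congr (pbase_sameCycle h i)).symm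

lemma pbase_inv_apply (h : Perm (Fin n)) (i : Fin n) : pbase h (h⁻¹ i) = pbase h i :=
  (pbase_congr ⟨-1, by simp⟩).symm

lemma pbase_one (i : Fin n) : pbase (1 : Perm (Fin n)) i = i := by
  have h1 : (Finset.univ.filter (fun j => (1 : Perm (Fin n)).SameCycle i j)) = {i} := by
    ext x; simp [Perm.sameCycle_one, eq_comm]
  rw [pbase]
  simp only [h1]
  exact Finset.min'_singleton i

lemma exists_pow_pbase (h : Perm (Fin n)) (i : Fin n) :
    ∃ j : ℕ, (h ^ j) (pbase h i) = i := by
  obtain ⟨j, _, hj⟩ := (pbase_sameCycle h i).symm.exists_pow_eq'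
  exact ⟨j, hj⟩

/-- The position of `i` along its cycle, starting from the base point. -/
noncomputable def tIdx (h : Perm (Fin n)) (i : Fin n) : ℕ :=
  Nat.find (exists_pow_pbase h i)

lemma tIdx_spec (h : Perm (Fin n)) (i : Fin n) : (h ^ tIdx h i) (pbase h i) = i :=
  Nat.find_spec (exists_pow_pbase h i)

lemma pbase_eq_of_tIdx_eq_zero {h : Perm (Fin n)} {i : Fin n} (ht : tIdx h i = 0) :
    pbase h i = i := by
  have := tIdx_spec h i
  rw [ht] at this
  simpa using this

lemma tIdx_inv_apply {h : Perm (Fin n)} {i : Fin n} {j : ℕ} (ht : tIdx h i = j + 1) :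
    tIdx h (h⁻¹ i) = j := by
  have hb := pbase_inv_apply h i
  have hspec : (h ^ j) (pbase h (h⁻¹ i)) = h⁻¹ i := by
    rw [hb]
    have := tIdx_spec h i
    rw [ht, pow_succ'] at this
    -- (h * h^j) (pbase h i) = i
    have h2 : h ((h ^ j) (pbase h i)) = i := this
    rw [Perm.inv_def, Equiv.eq_symm_apply]
    exact h2
  rw [tIdx]
  rw [Nat.find_eq_iff]
  refine ⟨hspec, ?_⟩
  intro k hk hks
  -- (h^k) (pbase h (h⁻¹ i)) = h⁻¹ i with k < j, contradicting minimality of tIdx h i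
  rw [hb] at hks
  have : (h ^ (k + 1)) (pbase h i) = i := by
    rw [pow_succ']
    have h3 : h ((h ^ k) (pbase h i)) = h (h⁻¹ i) := congrArg h hks
    simpa using h3
  have hlt : k + 1 < tIdx h i := by omega
  exact Nat.find_min (exists_pow_pbase h i) hlt this

/-- Partial products of `m` along the cycle of `b` under `h`. -/
def cprod (m : Fin n → X) (h : Perm (Fin n)) (b : Fin n) : ℕ → X
  | 0 => 1
  | (j + 1) => m ((h ^ (j + 1)) b) * cprod m h b j

/-- The normalizing conjugator. -/
noncomputable def vconj (m : Fin n → X) (h : Perm (Fin n)) (i : Fin n) : X :=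
  (cprod m h (pbase h i) (tIdx h i))⁻¹

/-- The normal form of `m` with respect to `h` under twisted conjugation. -/
noncomputable def nform (m : Fin n → X) (h : Perm (Fin n)) (i : Fin n) : X :=
  vconj m h i * m i * (vconj m h (h⁻¹ i))⁻¹

lemma nform_eq_one {m : Fin n → X} {h : Perm (Fin n)} {i : Fin n}
    (hi : pbase h i ≠ i) : nform m h i = 1 := by
  obtain ⟨j, hj⟩ : ∃ j, tIdx h i = j + 1 := by
    rcases Nat.eq_zero_or_pos (tIdx h i) with h0 | h0
    · exact absurd (pbase_eq_of_tIdx_eq_zero h0) hi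
    · exact ⟨tIdx h i - 1, by omega⟩
  have ht' := tIdx_inv_apply hj
  have hb := pbase_inv_apply h i
  have hmi : m i = m ((h ^ (j + 1)) (pbase h i)) := by
    rw [← hj, tIdx_spec]
  rw [nform, vconj, vconj, hj, ht', hb, hmi, cprod]
  group

lemma exists_twist_of_pointwise_conj {m m' : Fin n → X} {h : Perm (Fin n)}
    (hm : ∀ i, pbase h i ≠ i → m i = 1) (hm' : ∀ i, pbase h i ≠ i → m' i = 1)
    (hc : ∀ i, IsConj (m i) (m' i)) :
    ∃ u : Fin n → X, ∀ i, u i * m i * (u (h⁻¹ i))⁻¹ = m' i := by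
  refine ⟨fun i => Classical.choose (isConj_iff.mp (hc (pbase h i))), fun i => ?_⟩
  have hbase : pbase h (h⁻¹ i) = pbase h i := pbase_inv_apply h i
  simp only [hbase]
  by_cases hp : pbase h i = i
  · have h2 := Classical.choose_spec (isConj_iff.mp (hc (pbase h i)))
    have e1 : m (pbase h i) = m i := by rw [hp]
    have e2 : m' (pbase h i) = m' i := by rw [hp]
    rw [← e1, ← e2]
    exact h2
  · rw [hm i hp, hm' i hp]
    group

section WreathLemmas

variable {H : Subgroup (Perm (Fin n))}

lemma wreath_conj_inl (v m : Fin n → X) (h : H) :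
    (SemidirectProduct.inl v : Wreath X H) * ⟨m, h⟩ * (SemidirectProduct.inl v)⁻¹
      = ⟨fun i => v i * m i * (v ((h : Perm (Fin n))⁻¹ i))⁻¹, h⟩ := by
  refine SemidirectProduct.ext (funext fun i => ?_) ?_
  · show v i * m i * (v ((h : Perm (Fin n))⁻¹ i))⁻¹ = _
    rfl
  · show 1 * h * 1 = h
    simp

lemma wreath_conj_inr (σ : H) (m : Fin n → X) :
    (SemidirectProduct.inr σ : Wreath X H) * ⟨m, 1⟩ * (SemidirectProduct.inr σ)⁻¹
      = ⟨fun i => m ((σ : Perm (Fin n))⁻¹ i), 1⟩ := by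
  refine SemidirectProduct.ext (funext fun i => ?_) ?_
  · show 1 * m ((σ : Perm (Fin n))⁻¹ i) * (1 : X)⁻¹ = _
    simp
  · show σ * 1 * σ⁻¹ = 1
    simp

lemma isConj_nform (m : Fin n → X) (h : H) :
    IsConj (⟨m, h⟩ : Wreath X H) ⟨nform m (h : Perm (Fin n)), h⟩ := by
  refine isConj_iff.mpr ⟨SemidirectProduct.inl (vconj m (h : Perm (Fin n))), ?_⟩
  rw [wreath_conj_inl]
  exact SemidirectProduct.ext (funext fun i => rfl) rfl

lemma isConj_of_pointwise_conj (m m' : Fin n → X) (h : H)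
    (hm : ∀ i, pbase (h : Perm (Fin n)) i ≠ i → m i = 1)
    (hm' : ∀ i, pbase (h : Perm (Fin n)) i ≠ i → m' i = 1)
    (hc : ∀ i, IsConj (m i) (m' i)) :
    IsConj (⟨m, h⟩ : Wreath X H) ⟨m', h⟩ := by
  obtain ⟨u, hu⟩ := exists_twist_of_pointwise_conj hm hm' hc
  refine isConj_iff.mpr ⟨SemidirectProduct.inl u, ?_⟩
  rw [wreath_conj_inl]
  exact SemidirectProduct.ext (funext hu) rfl

end WreathLemmas

section Counting

lemma orbitRel_zpowers_iff (h : Perm (Fin n)) (x y : Fin n) :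
    orbitRel (Subgroup.zpowers h) (Fin n) x y ↔ h.SameCycle y x := by
  rw [orbitRel_apply, MulAction.mem_orbit_iff]
  constructor
  · rintro ⟨⟨g, hg⟩, hgy⟩
    obtain ⟨z, rfl⟩ := Subgroup.mem_zpowers_iff.mp hg
    exact ⟨z, hgy⟩
  · rintro ⟨z, hz⟩
    exact ⟨⟨h ^ z, Subgroup.zpow_mem _ (Subgroup.mem_zpowers h) z⟩, hz⟩

/-- Points that are base points of their own cycle. -/
def Bases (h : Perm (Fin n)) : Type := {i : Fin n // pbase h i = i}

noncomputable instance (h : Perm (Fin n)) : Fintype (Bases h) := by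
  unfold Bases; exact Fintype.ofFinite _

noncomputable def basesEquiv (h : Perm (Fin n)) :
    Bases h ≃ orbitRel.Quotient (Subgroup.zpowers h) (Fin n) := by
  refine Equiv.ofBijective (fun b => Quotient.mk'' b.1) ⟨?_, ?_⟩
  · rintro ⟨i, hi⟩ ⟨j, hj⟩ hij
    have : orbitRel (Subgroup.zpowers h) (Fin n) i j := Quotient.eq''.mp hij
    have hsc : h.SameCycle j i := (orbitRel_zpowers_iff h i j).mp this
    have hp := pbase_congr hsc
    exact Subtype.ext (hi.symm.trans (hp.symm.trans hj))
  · intro q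
    obtain ⟨x, rfl⟩ := Quotient.mk''_surjective q
    refine ⟨⟨pbase h x, pbase_pbase h x⟩, ?_⟩
    exact Quotient.eq''.mpr ((orbitRel_zpowers_iff h _ _).mpr (pbase_sameCycle h x))

lemma card_bases (h : Perm (Fin n)) : Nat.card (Bases h) = cycleCount h :=
  Nat.card_congr (basesEquiv h)

/-- Functions supported on base points. -/
def FibT (h : Perm (Fin n)) (C : Type*) [One C] : Type _ :=
  {f : Fin n → C // ∀ i, pbase h i ≠ i → f i = 1}

noncomputable def fibTEquiv (h : Perm (Fin n)) (C : Type*) [One C] :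
    FibT h C ≃ (Bases h → C) where
  toFun f := fun b => f.1 b.1
  invFun g := ⟨fun i => if hp : pbase h i = i then g ⟨i, hp⟩ else 1, by
    intro i hi; simp [hi]⟩
  left_inv f := by
    apply Subtype.ext
    funext i
    by_cases hp : pbase h i = i
    · simp [hp]
    · simp [hp, f.2 i hp]
  right_inv g := by
    funext b
    simp [b.2]
    rfl

lemma card_fibT (h : Perm (Fin n)) (C : Type*) [One C] [Finite C] :
    Nat.card (FibT h C) = Nat.card C ^ cycleCount h := by
  rw [Nat.card_congr (fibTEquiv h C), Nat.card_fun, card_bases]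

end Counting

section FixedBy

variable {H : Subgroup (Perm (Fin n))} {C : Type*}

lemma hsmul_apply (h : H) (f : Fin n → C) (i : Fin n) :
    (h • f) i = f ((h : Perm (Fin n))⁻¹ i) := rfl

lemma fixedBy_constant {h : H} {f : Fin n → C} (hf : f ∈ fixedBy (Fin n → C) h)
    (i : Fin n) : f (pbase (h : Perm (Fin n)) i) = f i := by
  have hstep : ∀ j : Fin n, f ((h : Perm (Fin n)) j) = f j := by
    intro j
    have := congrFun hf ((h : Perm (Fin n)) j)
    rw [hsmul_apply] at this
    simpa using this.symm
  have hpow : ∀ (k : ℕ) (j : Fin n), f (((h : Perm (Fin n)) ^ k) j) = f j := by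
    intro k
    induction k with
    | zero => intro j; simp
    | succ k ih =>
      intro j
      rw [pow_succ, Perm.mul_apply, ih, hstep]
  obtain ⟨k, _, hk⟩ := (pbase_sameCycle (h : Perm (Fin n)) i).exists_pow_eq'
  rw [← hk, hpow]

noncomputable def fixedByEquiv (h : H) :
    fixedBy (Fin n → C) h ≃ (Bases (h : Perm (Fin n)) → C) where
  toFun f := fun b => f.1 b.1
  invFun g := ⟨fun i => g ⟨pbase (h : Perm (Fin n)) i, pbase_pbase _ i⟩, by
    funext i
    rw [hsmul_apply]
    exact congrArg g (Subtype.ext (pbase_inv_apply (h : Perm (Fin n)) i))⟩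
  left_inv f := by
    apply Subtype.ext
    funext i
    exact fixedBy_constant f.2 i
  right_inv g := by
    funext b
    exact congrArg g (Subtype.ext b.2)

lemma card_fixedBy (h : H) [Finite C] :
    Nat.card (fixedBy (Fin n → C) h) = Nat.card C ^ cycleCount (h : Perm (Fin n)) := by
  rw [Nat.card_congr (fixedByEquiv h), Nat.card_fun, card_bases]

end FixedBy

section MainCount

variable {H : Subgroup (Perm (Fin n))}

instance wreathFinite [Finite X] : Finite (Wreath X H) :=
  Finite.of_injective (fun g : Wreath X H => (g.left, g.right))
    (fun _ _ hab => SemidirectProduct.ext (congrArg Prod.fst hab) (congrArg Prod.snd hab))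

/-- The data associated to a nontrivial-coset element. -/
noncomputable def fibData (m : Fin n → X) (h : Perm (Fin n)) : FibT h (ConjClasses X) :=
  ⟨fun i => ConjClasses.mk (nform m h i),
    fun i hi => by
      show ConjClasses.mk (nform m h i) = 1
      rw [nform_eq_one hi, ConjClasses.one_eq_mk_one]⟩

/-- The raw classifying map on wreath product elements. -/
noncomputable def rawAux (m : Fin n → X) (r : H) :
    (orbitRel.Quotient H (Fin n → ConjClasses X)) ⊕
      (Σ h : {h : H // h ≠ 1}, FibT ((h : H) : Perm (Fin n)) (ConjClasses X)) :=
  if hh : r = 1 then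
    Sum.inl (Quotient.mk'' (fun i => ConjClasses.mk (m i)))
  else
    Sum.inr ⟨⟨r, hh⟩, fibData m _⟩

noncomputable def rawMap (g : Wreath X H) := rawAux g.left g.right

lemma rawMap_isConj {g g' : Wreath X H} (e : rawMap g = rawMap g') : IsConj g g' := by
  obtain ⟨m, r⟩ := g
  obtain ⟨m', r'⟩ := g'
  have e' : rawAux (X := X) (H := H) m r = rawAux m' r' := e
  clear e
  unfold rawAux at e'
  by_cases h1 : r = 1 <;> by_cases h2 : r' = 1
  · -- both in base coset
    rw [dif_pos h1, dif_pos h2] at e'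
    subst h1; subst h2
    injection e' with e1
    have hrel : orbitRel H (Fin n → ConjClasses X)
        (fun i => ConjClasses.mk (m i)) (fun i => ConjClasses.mk (m' i)) :=
      Quotient.eq''.mp e1
    rw [orbitRel_apply, MulAction.mem_orbit_iff] at hrel
    obtain ⟨σ, hσ⟩ := hrel
    have hpt : ∀ i, IsConj (m' ((σ : Perm (Fin n))⁻¹ i)) (m i) := by
      intro i
      have := congrFun hσ i
      rw [hsmul_apply] at this
      exact ConjClasses.mk_eq_mk_iff_isConj.mp this
    have step1 : IsConj (⟨m', 1⟩ : Wreath X H) ⟨fun i => m' ((σ : Perm (Fin n))⁻¹ i), 1⟩ :=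
      isConj_iff.mpr ⟨SemidirectProduct.inr σ, wreath_conj_inr σ m'⟩
    have step2 : IsConj (⟨fun i => m' ((σ : Perm (Fin n))⁻¹ i), 1⟩ : Wreath X H) ⟨m, 1⟩ := by
      refine isConj_of_pointwise_conj _ _ 1 ?_ ?_ hpt
      · intro i hi
        exact absurd (by rw [OneMemClass.coe_one, pbase_one]) hi
      · intro i hi
        exact absurd (by rw [OneMemClass.coe_one, pbase_one]) hi
    exact (step1.trans step2).symm
  · rw [dif_pos h1, dif_neg h2] at e'
    exact absurd e' (by simp)
  · rw [dif_neg h1, dif_pos h2] at e'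
    exact absurd e' (by simp)
  · -- both in nontrivial cosets
    rw [dif_neg h1, dif_neg h2] at e'
    injection e' with e1
    obtain ⟨e2, e3⟩ := Sigma.mk.inj_iff.mp e1
    have hr : r = r' := congrArg Subtype.val e2
    subst hr
    have e4 : fibData m ((r : H) : Perm (Fin n)) = fibData m' ((r : H) : Perm (Fin n)) :=
      eq_of_heq e3
    have e5 := congrArg Subtype.val e4
    have hpt : ∀ i, IsConj (nform m ((r : H) : Perm (Fin n)) i)
        (nform m' ((r : H) : Perm (Fin n)) i) := by
      intro i
      exact ConjClasses.mk_eq_mk_iff_isConj.mp (congrFun e5 i)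
    have step1 : IsConj (⟨m, r⟩ : Wreath X H) ⟨nform m ((r : H) : Perm (Fin n)), r⟩ :=
      isConj_nform m r
    have step2 : IsConj (⟨nform m ((r : H) : Perm (Fin n)), r⟩ : Wreath X H)
        ⟨nform m' ((r : H) : Perm (Fin n)), r⟩ :=
      isConj_of_pointwise_conj _ _ r (fun i hi => nform_eq_one hi)
        (fun i hi => nform_eq_one hi) hpt
    have step3 : IsConj (⟨m', r⟩ : Wreath X H) ⟨nform m' ((r : H) : Perm (Fin n)), r⟩ :=
      isConj_nform m' r
    exact (step1.trans step2).trans step3.symm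

/-- The classifying map on conjugacy classes. -/
noncomputable def classMap (c : ConjClasses (Wreath X H)) :
    (orbitRel.Quotient H (Fin n → ConjClasses X)) ⊕
      (Σ h : {h : H // h ≠ 1}, FibT ((h : H) : Perm (Fin n)) (ConjClasses X)) :=
  rawMap (Quotient.out c)

lemma classMap_injective : Function.Injective (classMap (X := X) (H := H)) := by
  intro c c' e
  have hc : ConjClasses.mk (Quotient.out c) = c := Quotient.out_eq c
  have hc' : ConjClasses.mk (Quotient.out c') = c' := Quotient.out_eq c'
  rw [← hc, ← hc']
  exact ConjClasses.mk_eq_mk_iff_isConj.mpr (rawMap_isConj e)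

end MainCount

section CountBound

variable {H : Subgroup (Perm (Fin n))}

instance fibT_finite (h : Perm (Fin n)) (C : Type*) [One C] [Finite C] : Finite (FibT h C) := by
  unfold FibT; infer_instance

lemma card_classes_le [Finite X] [Fintype H] :
    Nat.card (ConjClasses (Wreath X H)) ≤
      Nat.card (orbitRel.Quotient H (Fin n → ConjClasses X))
        + ∑ h ∈ Finset.univ.erase (1 : H),
            Nat.card (ConjClasses X) ^ cycleCount ((h : Perm (Fin n))) := by
  classical
  letI : Fintype (ConjClasses X) := Fintype.ofFinite _
  have step := Nat.card_le_card_of_injective _ (classMap_injective (X := X) (H := H))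
  rw [Nat.card_sum] at step
  refine step.trans (Nat.add_le_add_left ?_ _)
  have hsig : Nat.card (Σ h : {h : H // h ≠ 1}, FibT ((h : H) : Perm (Fin n)) (ConjClasses X))
      = ∑ h : {h : H // h ≠ 1},
          Nat.card (ConjClasses X) ^ cycleCount (((h : H)) : Perm (Fin n)) := by
    letI : ∀ h : {h : H // h ≠ 1}, Fintype (FibT ((h : H) : Perm (Fin n)) (ConjClasses X)) :=
      fun h => Fintype.ofFinite _
    rw [Nat.card_eq_fintype_card, Fintype.card_sigma]
    congr 1
    funext h
    rw [← Nat.card_eq_fintype_card, card_fibT]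
  rw [hsig]
  exact le_of_eq (Finset.sum_subtype (Finset.univ.erase (1 : H))
    (fun x => by simp [Finset.mem_erase]) (fun h : H =>
      Nat.card (ConjClasses X) ^ cycleCount ((h : Perm (Fin n))))).symm

lemma burnside_classes [Finite X] [Fintype H] :
    Nat.card (orbitRel.Quotient H (Fin n → ConjClasses X)) * Nat.card H
      = ∑ h : H, Nat.card (ConjClasses X) ^ cycleCount ((h : Perm (Fin n))) := by
  classical
  letI : Fintype (ConjClasses X) := Fintype.ofFinite _
  letI : ∀ a : H, Fintype (fixedBy (Fin n → ConjClasses X) a) := fun a => Fintype.ofFinite _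
  letI : Fintype (orbitRel.Quotient H (Fin n → ConjClasses X)) := Fintype.ofFinite _
  have B := MulAction.sum_card_fixedBy_eq_card_orbits_mul_card_group H (Fin n → ConjClasses X)
  rw [Nat.card_eq_fintype_card, Nat.card_eq_fintype_card, ← B]
  congr 1
  funext h
  rw [← Nat.card_eq_fintype_card, card_fixedBy]

end CountBound

section Misc

lemma cycleCount_one : cycleCount (1 : Perm (Fin n)) = n := by
  rw [← card_bases]
  unfold Bases
  rw [Nat.card_congr (Equiv.subtypeUnivEquiv (fun i => pbase_one i))]
  simp

lemma nontrivial_conjClasses [Nontrivial X] : Nontrivial (ConjClasses X) := by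
  obtain ⟨x, hx⟩ := exists_ne (1 : X)
  exact ⟨ConjClasses.mk x, ConjClasses.mk 1, fun e =>
    hx (isConj_one_left.mp (ConjClasses.mk_eq_mk_iff_isConj.mp e))⟩

lemma n_pos_of_nontrivial {H : Subgroup (Perm (Fin n))} [Nontrivial H] : 0 < n := by
  rcases Nat.eq_zero_or_pos n with h0 | h
  · subst h0
    obtain ⟨x, hx⟩ := exists_ne (1 : H)
    exact absurd (Subtype.ext (Equiv.ext (fun i => i.elim0))) hx
  · exact h

end Misc

/-- If `α(H) n ≤ n - log_k (2 k n |H|²)`, then `k(X ≀ H) < (1 + 1/(kn)) k^n / |H|`. -/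
theorem statement6 (n : ℕ) (X : Type) [Group X] [Finite X] [Nontrivial X]
    (H : Subgroup (Perm (Fin n))) [Nontrivial H] (α : ℝ)
    (hα : IsGreatest
      {a : ℝ | ∃ h : H, h ≠ 1 ∧ a = (cycleCount (h : Perm (Fin n)) : ℝ) / n} α)
    (hcond : α * n ≤ n - Real.logb (kclass X)
      (2 * (kclass X : ℝ) * n * (Nat.card H : ℝ) ^ 2)) :
    (kclass (Wreath X H) : ℝ) <
      (1 + 1 / ((kclass X : ℝ) * n)) * ((kclass X : ℝ) ^ n / (Nat.card H : ℝ)) := by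
  classical
  letI : Fintype H := Fintype.ofFinite H
  have hn : 0 < n := n_pos_of_nontrivial (H := H)
  have hk2 : 2 ≤ Nat.card (ConjClasses X) := by
    have := nontrivial_conjClasses (X := X)
    exact Finite.one_lt_card
  have hH2 : 2 ≤ Nat.card H := Finite.one_lt_card
  have hcount := card_classes_le (X := X) (H := H)
  have hburn := burnside_classes (X := X) (H := H)
  unfold kclass
  set k : ℕ := Nat.card (ConjClasses X) with hkdef
  set A : ℕ := Nat.card (orbitRel.Quotient H (Fin n → ConjClasses X)) with hAdef
  set S : ℕ := ∑ h ∈ Finset.univ.erase (1 : H), k ^ cycleCount (h : Perm (Fin n)) with hSdef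
  have hsplit : ∑ h : H, k ^ cycleCount ((h : Perm (Fin n))) = k ^ n + S := by
    rw [← Finset.add_sum_erase Finset.univ _ (Finset.mem_univ (1 : H))]
    congr 1
    rw [OneMemClass.coe_one, cycleCount_one]
  -- real abbreviations
  set Kk : ℝ := (k : ℝ) with hKk
  set N : ℝ := (n : ℝ) with hN
  set KH : ℝ := (Nat.card H : ℝ) with hKH
  set P : ℝ := Kk ^ n with hP
  set D : ℝ := 2 * Kk * N * KH ^ 2 with hD
  have hKk2 : (2 : ℝ) ≤ Kk := by rw [hKk]; exact_mod_cast hk2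
  have hKk1 : (1 : ℝ) < Kk := by linarith
  have hKkpos : (0 : ℝ) < Kk := by linarith
  have hN1 : (1 : ℝ) ≤ N := by rw [hN]; exact_mod_cast hn
  have hNpos : (0 : ℝ) < N := by linarith
  have hKH2 : (2 : ℝ) ≤ KH := by rw [hKH]; exact_mod_cast hH2
  have hKHpos : (0 : ℝ) < KH := by linarith
  have hPpos : (0 : ℝ) < P := by positivity
  have hDpos : (0 : ℝ) < D := by positivity
  -- bound on each nonidentity term
  have hterm : ∀ h ∈ Finset.univ.erase (1 : H),
      (k : ℝ) ^ cycleCount ((h : Perm (Fin n))) ≤ P / D := by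
    intro h hh
    have hne : h ≠ 1 := (Finset.mem_erase.mp hh).1
    have hmem : ((cycleCount ((h : Perm (Fin n))) : ℝ) / n) ∈
        {a : ℝ | ∃ h : H, h ≠ 1 ∧ a = (cycleCount (h : Perm (Fin n)) : ℝ) / n} :=
      ⟨h, hne, rfl⟩
    have hle : (cycleCount ((h : Perm (Fin n))) : ℝ) / N ≤ α := hα.2 hmem
    have hσ : (cycleCount ((h : Perm (Fin n))) : ℝ) ≤ α * N :=
      (div_le_iff₀ hNpos).mp hle
    have e1 : (k : ℝ) ^ cycleCount ((h : Perm (Fin n)))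
        = Kk ^ ((cycleCount ((h : Perm (Fin n))) : ℝ)) := by
      rw [Real.rpow_natCast]
    have e2 : Kk ^ ((cycleCount ((h : Perm (Fin n))) : ℝ))
        ≤ Kk ^ (N - Real.logb Kk D) := by
      apply Real.rpow_le_rpow_of_exponent_le (le_of_lt hKk1)
      calc (cycleCount ((h : Perm (Fin n))) : ℝ) ≤ α * N := hσ
        _ ≤ N - Real.logb Kk D := hcond
    have e3 : Kk ^ (N - Real.logb Kk D) = P / D := by
      rw [Real.rpow_sub hKkpos, Real.rpow_logb hKkpos (by linarith) hDpos]
      rw [hN, Real.rpow_natCast]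
    rw [e1]
    rw [← e3]
    exact e2
  -- bound on S
  have hScast : (S : ℝ) = ∑ h ∈ Finset.univ.erase (1 : H),
      (k : ℝ) ^ cycleCount ((h : Perm (Fin n))) := by
    rw [hSdef]
    push_cast
    rfl
  have hcard_erase : ((Finset.univ.erase (1 : H)).card : ℝ) = KH - 1 := by
    rw [Finset.card_erase_of_mem (Finset.mem_univ _), Finset.card_univ,
      ← Nat.card_eq_fintype_card]
    have : (1 : ℕ) ≤ Nat.card H := by omega
    push_cast [this]
    ring
  have hSle : (S : ℝ) ≤ (KH - 1) * (P / D) := by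
    rw [hScast]
    calc ∑ h ∈ Finset.univ.erase (1 : H), (k : ℝ) ^ cycleCount ((h : Perm (Fin n)))
        ≤ (Finset.univ.erase (1 : H)).card • (P / D) :=
          Finset.sum_le_card_nsmul _ _ _ hterm
      _ = ((Finset.univ.erase (1 : H)).card : ℝ) * (P / D) := by
          rw [nsmul_eq_mul]
      _ = (KH - 1) * (P / D) := by rw [hcard_erase]
  have hSle' : (S : ℝ) * D ≤ (KH - 1) * P := by
    have := mul_le_mul_of_nonneg_right hSle (le_of_lt hDpos)
    calc (S : ℝ) * D ≤ (KH - 1) * (P / D) * D := this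
      _ = (KH - 1) * P := by field_simp
  -- Burnside equation over ℝ
  have hburn' : A * Nat.card H = k ^ n + S := by rw [hburn, hsplit]
  have hAeq : (A : ℝ) * KH = P + (S : ℝ) := by rw [hP, hKH, hKk]; exact_mod_cast hburn'
  -- main count over ℝ
  have t0 : (Nat.card (ConjClasses (Wreath X H)) : ℝ) ≤ (A : ℝ) + (S : ℝ) := by
    exact_mod_cast hcount
  -- final arithmetic
  have h2 : (1 + 1 / (Kk * N)) * (P / KH) = ((Kk * N + 1) * P) / (Kk * N * KH) := by
    field_simp
  rw [h2]
  have hq : (0 : ℝ) < Kk * N * KH := by positivity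
  refine lt_of_le_of_lt t0 ?_
  rw [lt_div_iff₀ hq]
  -- goal : ((A:ℝ) + S) * (Kk * N * KH) < (Kk * N + 1) * P
  have hs0 : (0 : ℝ) ≤ (S : ℝ) := Nat.cast_nonneg _
  nlinarith [mul_le_mul_of_nonneg_right hSle' (le_of_lt hKHpos), hAeq, hPpos,
    mul_pos hKkpos hNpos, mul_le_mul_of_nonneg_left hSle' (le_of_lt (mul_pos hKkpos hNpos)),
    mul_pos (mul_pos hKkpos hNpos) hKHpos, sq_nonneg (KH - 1), sq_nonneg KH,
    mul_pos hPpos hKHpos]
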